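/- For every real number p with 0 < p < 1, the Lebesgue integral over ℝ of the function x ↦ exp(-exp(-(x - log(1-p)))) · exp(-(x - log p) - exp(-(x - log p))) equals p. -/

import Mathlib

open MeasureTheory Filter Real

lemma exp_ge_two_mul (t : ℝ) : 2 * t ≤ Real.exp t := by
  rcases le_or_gt t 0 with h | h
  · nlinarith [Real.exp_pos t]
  · have h2 : Real.exp t = Real.exp (t/2) * Real.exp (t/2) := by
      rw [← Real.exp_add]; ring_nf
    nlinarith [Real.add_one_le_exp (t/2), sq_nonneg (1 - t/2), Real.exp_pos (t/2)]

lemma gumbel_integrable : Integrable (fun x : ℝ => Real.exp (-x - Real.exp (-x))) := by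
  have hcont : Continuous (fun x : ℝ => Real.exp (-x - Real.exp (-x))) := by
    continuity
  rw [← integrableOn_univ, ← Set.Iic_union_Ioi (a := (0:ℝ)), integrableOn_union]
  constructor
  · apply Integrable.mono (g := fun x : ℝ => Real.exp x)
    · exact integrableOn_exp_Iic 0
    · exact hcont.aestronglyMeasurable.restrict
    · filter_upwards [ae_restrict_mem measurableSet_Iic] with x hx
      rw [Real.norm_eq_abs, Real.norm_eq_abs, abs_of_pos (Real.exp_pos _),
        abs_of_pos (Real.exp_pos _)]
      apply Real.exp_le_exp.2
      have := exp_ge_two_mul (-x)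
      linarith
  · apply Integrable.mono (g := fun x : ℝ => Real.exp (-1 * x))
    · exact exp_neg_integrableOn_Ioi 0 one_pos
    · exact hcont.aestronglyMeasurable.restrict
    · filter_upwards [ae_restrict_mem measurableSet_Ioi] with x hx
      rw [Real.norm_eq_abs, Real.norm_eq_abs, abs_of_pos (Real.exp_pos _),
        abs_of_pos (Real.exp_pos _)]
      apply Real.exp_le_exp.2
      have := (Real.exp_pos (-x)).le
      linarith

lemma gumbel_integral : ∫ x : ℝ, Real.exp (-x - Real.exp (-x)) = 1 := by
  have hderiv : ∀ x : ℝ, HasDerivAt (fun x : ℝ => Real.exp (-Real.exp (-x)))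
      (Real.exp (-x - Real.exp (-x))) x := by
    intro x
    have h1 : HasDerivAt (fun x : ℝ => -Real.exp (-x)) (Real.exp (-x)) x := by
      have := ((Real.hasDerivAt_exp (-x)).comp x (hasDerivAt_neg x)).neg
      simpa [Function.comp_def, Pi.neg_def] using this
    have h2 := (Real.hasDerivAt_exp (-Real.exp (-x))).comp x h1
    have : Real.exp (-Real.exp (-x)) * Real.exp (-x) = Real.exp (-x - Real.exp (-x)) := by
      rw [← Real.exp_add]; ring_nf
    rwa [this] at h2
  have hbot : Tendsto (fun x : ℝ => Real.exp (-Real.exp (-x))) atBot (nhds 0) := by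
    apply Real.tendsto_exp_atBot.comp
    apply tendsto_neg_atTop_atBot.comp
    exact Real.tendsto_exp_atTop.comp tendsto_neg_atBot_atTop
  have htop : Tendsto (fun x : ℝ => Real.exp (-Real.exp (-x))) atTop (nhds 1) := by
    have : Tendsto (fun x : ℝ => -Real.exp (-x)) atTop (nhds 0) := by
      simpa using (tendsto_exp_neg_atTop_nhds_zero).neg
    simpa [Function.comp_def] using (Real.continuous_exp.tendsto 0).comp this
  have := integral_of_hasDerivAt_of_tendsto hderiv gumbel_integrable hbot htop
  simpa using this

/-- For every `p ∈ (0,1)`, the integral over `ℝ` of the product of the `Gumbel(log (1-p), 1)`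
CDF and the `Gumbel(log p, 1)` density equals `p`. -/
theorem gumbel_cdf_density_integral (p : ℝ) (hp0 : 0 < p) (hp1 : p < 1) :
    ∫ x : ℝ, Real.exp (-Real.exp (-(x - Real.log (1 - p)))) *
        Real.exp (-(x - Real.log p) - Real.exp (-(x - Real.log p))) = p := by
  have h1p : (0:ℝ) < 1 - p := by linarith
  have key : ∀ x : ℝ, Real.exp (-Real.exp (-(x - Real.log (1 - p)))) *
      Real.exp (-(x - Real.log p) - Real.exp (-(x - Real.log p)))
      = p * Real.exp (-x - Real.exp (-x)) := by
    intro x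
    have e1 : Real.exp (-(x - Real.log (1 - p))) = (1 - p) * Real.exp (-x) := by
      rw [neg_sub, Real.exp_sub, Real.exp_log h1p, Real.exp_neg]
      ring
    have e2 : Real.exp (-(x - Real.log p)) = p * Real.exp (-x) := by
      rw [neg_sub, Real.exp_sub, Real.exp_log hp0, Real.exp_neg]
      ring
    have h3 : -Real.exp (-(x - Real.log (1 - p))) + (-(x - Real.log p) -
        Real.exp (-(x - Real.log p))) = Real.log p + (-x - Real.exp (-x)) := by
      rw [e1, e2]; ring
    rw [← Real.exp_add, h3, Real.exp_add, Real.exp_log hp0]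
  simp_rw [key]
  rw [integral_const_mul, gumbel_integral, mul_one]
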